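/- For 0 < p ≤ 1/2, the function f(p) = 2·H(p) + D(1-p‖p) is monotonically decreasing in p, is unbounded as p → 0⁺, and satisfies f(1/2) = 2. -/

import Mathlib

open Real Set

/-- Binary Shannon entropy (base 2), with the convention 0 · log 0 = 0. -/
noncomputable def H (q : ℝ) : ℝ := -(q * Real.logb 2 q) - (1 - q) * Real.logb 2 (1 - q)

/-- Binary Kullback–Leibler divergence (base 2), with the convention 0 · log 0 = 0. -/
noncomputable def D (q p : ℝ) : ℝ :=
  q * Real.logb 2 (q / p) + (1 - q) * Real.logb 2 ((1 - q) / (1 - p))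

lemma key (p : ℝ) (hp : 0 < p) (hp1 : p < 1) :
    2 * H p + D (1 - p) p = -Real.logb 2 p - Real.logb 2 (1 - p) := by
  have h1 : (0:ℝ) < 1 - p := by linarith
  have e : 1 - (1 - p) = p := by ring
  simp only [H, D, e]
  rw [Real.logb_div (ne_of_gt h1) (ne_of_gt hp), Real.logb_div (ne_of_gt hp) (ne_of_gt h1)]
  ring

lemma half_val : 2 * H (1/2) + D (1 - 1/2) (1/2) = 2 := by
  have : Real.logb 2 (1/2 : ℝ) = -1 := by
    rw [show (1/2 : ℝ) = 2⁻¹ by norm_num, Real.logb_inv, Real.logb_self_eq_one] ; norm_num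
  norm_num [H, D, this]

theorem stmt_1 :
    StrictAntiOn (fun p : ℝ => 2 * H p + D (1 - p) p) (Ioc (0:ℝ) (1/2)) ∧
    Filter.Tendsto (fun p : ℝ => 2 * H p + D (1 - p) p)
      (nhdsWithin 0 (Ioi 0)) Filter.atTop ∧
    2 * H (1/2) + D (1 - 1/2) (1/2) = 2 := by
  refine ⟨?_, ?_, half_val⟩
  · intro a ha b hb hab
    obtain ⟨ha0, ha2⟩ := ha
    obtain ⟨hb0, hb2⟩ := hb
    have ha1 : a < 1 := by linarith
    have hb1 : b < 1 := by linarith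
    simp only [key a ha0 ha1, key b hb0 hb1]
    have h1 : Real.logb 2 a < Real.logb 2 b ∨ True := Or.inr trivial
    have hab' : a * (1 - a) < b * (1 - b) := by nlinarith
    have := Real.logb_lt_logb (by norm_num : (1:ℝ) < 2)
      (mul_pos ha0 (by linarith)) hab'
    rw [Real.logb_mul (ne_of_gt ha0) (by linarith : (1:ℝ) - a ≠ 0),
        Real.logb_mul (ne_of_gt hb0) (by linarith : (1:ℝ) - b ≠ 0)] at this
    linarith
  · apply Filter.Tendsto.congr'
    · filter_upwards [Ioo_mem_nhdsGT_of_mem (by norm_num : (0:ℝ) ∈ Ico (0:ℝ) 1)] with p hp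
      exact (key p hp.1 hp.2).symm
    · have h1 : Filter.Tendsto (fun p : ℝ => -Real.logb 2 p) (nhdsWithin 0 (Ioi 0))
          Filter.atTop := by
        have : Filter.Tendsto (Real.logb 2) (nhdsWithin 0 (Ioi 0)) Filter.atBot :=
          Real.tendsto_logb_nhdsGT_zero (by norm_num)
        exact Filter.tendsto_neg_atTop_iff.mpr this
      have h2 : Filter.Tendsto (fun p : ℝ => -Real.logb 2 (1 - p)) (nhdsWithin 0 (Ioi 0))
          (nhds (-Real.logb 2 1)) := by
        apply Filter.Tendsto.mono_left _ nhdsWithin_le_nhds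
        have hc : ContinuousAt (fun p : ℝ => -Real.logb 2 (1 - p)) 0 := by
          exact ((Real.continuousAt_logb (by norm_num)).comp (by fun_prop)).neg
        simpa using hc.tendsto
      simpa [sub_eq_add_neg] using h1.atTop_add h2
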